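/- arXiv:1911.04355 — 2 statements merged into one kernel-verified Lean document; each statement's English description precedes it below -/
import Mathlib

section
/- Fix n ≥ 1 and vectors β_p ∈ ℝⁿ (p ≥ 2) with nonnegative entries, β_p = 0 for odd p, Σ_{p≥2} 2^p β_p(j)² < ∞ for every j ≤ n, and assume that for each j ≤ n there exists some p ≥ 2 with β_p(j) ≠ 0. Let Q_{ℓ−1} and Q_ℓ be n×n real symmetric positive semidefinite matrices with entries in [−1,1] such that Q_{ℓ−1} ⪯ Q_ℓ in the Loewner order, det Q_ℓ > 0, and det(Q_ℓ − Q_{ℓ−1}) > 0. Then det(ξ'(Q_ℓ) − ξ'(Q_{ℓ−1})) > 0. -/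
open Matrix BigOperators Filter MeasureTheory

noncomputable section

namespace SphericalSG

abbrev Mat (n : ℕ) := Matrix (Fin n) (Fin n) ℝ

variable {n : ℕ}

/-- Frobenius inner product `⟨A,B⟩ = tr(AB)`. -/
def ip (A B : Mat n) : ℝ := (A * B).trace

/-- Sum of all entries of a matrix. -/
def matSum (A : Mat n) : ℝ := ∑ i, ∑ j, A i j

/-- `ξ(A) = Σ_{p≥2} (β_p β_pᵀ) ⊙ A^{∘p}` (entrywise). -/
def xiM (β : ℕ → Fin n → ℝ) (A : Mat n) : Mat n :=
  Matrix.of fun i j => ∑' p : ℕ, β (p + 2) i * β (p + 2) j * A i j ^ (p + 2)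

/-- `ξ'(A) = Σ_{p≥2} p (β_p β_pᵀ) ⊙ A^{∘(p-1)}`. -/
def xi'M (β : ℕ → Fin n → ℝ) (A : Mat n) : Mat n :=
  Matrix.of fun i j => ∑' p : ℕ, ((p : ℝ) + 2) * (β (p + 2) i * β (p + 2) j * A i j ^ (p + 1))

/-- `ξ''(A) = Σ_{p≥2} p(p-1) (β_p β_pᵀ) ⊙ A^{∘(p-2)}`. -/
def xi''M (β : ℕ → Fin n → ℝ) (A : Mat n) : Mat n :=
  Matrix.of fun i j =>
    ∑' p : ℕ, ((p : ℝ) + 2) * ((p : ℝ) + 1) * (β (p + 2) i * β (p + 2) j * A i j ^ p)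

/-- `θ(A) = Σ_{p≥2} (p-1) (β_p β_pᵀ) ⊙ A^{∘p}`. -/
def thetaM (β : ℕ → Fin n → ℝ) (A : Mat n) : Mat n :=
  Matrix.of fun i j => ∑' p : ℕ, ((p : ℝ) + 1) * (β (p + 2) i * β (p + 2) j * A i j ^ (p + 2))

/-- `Λ_p = Λ - Σ_{k=p}^{r-1} x_k (ξ'(Q_{k+1}) - ξ'(Q_k))`, with `Λ_r = Λ`. -/
def Lam (β : ℕ → Fin n → ℝ) (x : ℕ → ℝ) (Qs : ℕ → Mat n) (Λ : Mat n) (r p : ℕ) : Mat n :=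
  Λ - ∑ k ∈ Finset.Ico p r, x k • (xi'M β (Qs (k + 1)) - xi'M β (Qs k))

/-- `D_p = Σ_{k=p}^{r-1} x_k (Q_{k+1} - Q_k)`. -/
def Dmat (x : ℕ → ℝ) (Qs : ℕ → Mat n) (r p : ℕ) : Mat n :=
  ∑ k ∈ Finset.Ico p r, x k • (Qs (k + 1) - Qs k)

/-- The discrete Parisi functional `𝒫_r(Λ, x̲, Q̲)`. -/
def Pfun (β : ℕ → Fin n → ℝ) (h : Fin n → ℝ) (Q : Mat n) (r : ℕ)
    (Λ : Mat n) (x : ℕ → ℝ) (Qs : ℕ → Mat n) : ℝ :=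
  (1 / 2) * (ip (vecMulVec h h) (Lam β x Qs Λ r 1)⁻¹ + ip Λ Q - (n : ℝ)
    - Real.log Λ.det
    + ∑ k ∈ Finset.Ico 1 r,
        (1 / x k) * Real.log ((Lam β x Qs Λ r (k + 1)).det / (Lam β x Qs Λ r k).det)
    + ip (xi'M β (Qs 1)) (Lam β x Qs Λ r 1)⁻¹
    - ∑ k ∈ Finset.Ico 1 r, x k * matSum (thetaM β (Qs (k + 1)) - thetaM β (Qs k)))

/-- The discrete Crisanti–Sommers functional `𝒞_r(x̲, Q̲)`. -/
def Cfun (β : ℕ → Fin n → ℝ) (h : Fin n → ℝ) (Q : Mat n) (r : ℕ)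
    (x : ℕ → ℝ) (Qs : ℕ → Mat n) : ℝ :=
  (1 / 2) * (ip (vecMulVec h h) (Dmat x Qs r 1)
    + (1 / x (r - 1)) * Real.log (Q - Qs (r - 1)).det
    - ∑ k ∈ Finset.Ico 1 (r - 1),
        (1 / x k) * Real.log ((Dmat x Qs r (k + 1)).det / (Dmat x Qs r k).det)
    + ip (Qs 1) (Dmat x Qs r 1)⁻¹
    + ∑ k ∈ Finset.Ico 1 r, x k * matSum (xiM β (Qs (k + 1)) - xiM β (Qs k)))

/-- A discrete path `(x̲, Q̲)` of order `r`:
`0 = x_0 ≤ x_1 ≤ ⋯ ≤ x_{r-1} ≤ 1` and `0 = Q_0 ⪯ Q_1 ⪯ ⋯ ⪯ Q_r = Q`. -/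
structure IsPath (Q : Mat n) (r : ℕ) (x : ℕ → ℝ) (Qs : ℕ → Mat n) : Prop where
  x0 : x 0 = 0
  xmono : ∀ k, k + 1 ≤ r - 1 → x k ≤ x (k + 1)
  xtop : x (r - 1) ≤ 1
  Q0 : Qs 0 = 0
  Qr : Qs r = Q
  inc : ∀ k < r, (Qs (k + 1) - Qs k).PosSemidef

/-- A tuple `(Q_1, …, Q_{r-1})` with positive definite increments,
`Q_0 = 0` and `Q_r = Q`. -/
structure IsStrictTuple (Q : Mat n) (r : ℕ) (Qs : ℕ → Mat n) : Prop where
  Q0 : Qs 0 = 0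
  Qr : Qs r = Q
  inc : ∀ k < r, (Qs (k + 1) - Qs k).PosDef

/-- A strictly increasing sequence `0 = x_0 < x_1 < ⋯ < x_{r-1} = 1`. -/
structure IsStrictSeq (r : ℕ) (x : ℕ → ℝ) : Prop where
  x0 : x 0 = 0
  xmono : ∀ k, k + 1 ≤ r - 1 → x k < x (k + 1)
  xtop : x (r - 1) = 1

/-- `Ē_p = Σ_{k=p}^{r-1} x_k (E_{k+1} - E_k)`. -/
def Ebar (x : ℕ → ℝ) (E : ℕ → Mat n) (r p : ℕ) : Mat n :=
  ∑ k ∈ Finset.Ico p r, x k • (E (k + 1) - E k)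

/-- The error matrices for the Parisi critical point, with entrywise division by `ξ''`:
`E_p = (1/(x_p - x_{p-1})) ((Q_{p+1}-Q_p)⁻¹ - (Q_p-Q_{p-1})⁻¹) ⊘ ξ''(Q_p)`
for `1 ≤ p ≤ r-1`, and `E_p = 0` otherwise (in particular `E_r = 0`). -/
def EP (β : ℕ → Fin n → ℝ) (x : ℕ → ℝ) (Qs : ℕ → Mat n) (r p : ℕ) : Mat n :=
  if 1 ≤ p ∧ p ≤ r - 1 then
    Matrix.of fun i j =>
      (1 / (x p - x (p - 1))) *
        ((((Qs (p + 1) - Qs p)⁻¹ - (Qs p - Qs (p - 1))⁻¹) i j) / xi''M β (Qs p) i j)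
  else 0

/-- The error matrices for the Crisanti–Sommers critical point:
`E_p = (1/(x_p - x_{p-1})) ((Q_{p+1}-Q_p)⁻¹ - (Q_p-Q_{p-1})⁻¹)` for `1 ≤ p ≤ r-1`,
and `E_p = 0` otherwise (in particular `E_r = 0`). -/
def EC (x : ℕ → ℝ) (Qs : ℕ → Mat n) (r p : ℕ) : Mat n :=
  if 1 ≤ p ∧ p ≤ r - 1 then
    (1 / (x p - x (p - 1))) • ((Qs (p + 1) - Qs p)⁻¹ - (Qs p - Qs (p - 1))⁻¹)
  else 0

/-- The logarithmic barrier `Σ_{k=0}^{r-1} log det (Q_{k+1} - Q_k)`. -/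
def barrier (Qs : ℕ → Mat n) (r : ℕ) : ℝ :=
  ∑ k ∈ Finset.range r, Real.log ((Qs (k + 1) - Qs k).det)

/-- The barrier-perturbed Parisi functional `𝒫_r^ε`. -/
def PfunEps (β : ℕ → Fin n → ℝ) (h : Fin n → ℝ) (Q : Mat n) (r : ℕ) (ε : ℝ)
    (Λ : Mat n) (x : ℕ → ℝ) (Qs : ℕ → Mat n) : ℝ :=
  Pfun β h Q r Λ x Qs - (ε / 2) * barrier Qs r

/-- The barrier-perturbed Crisanti–Sommers functional `𝒞_r^ε`. -/
def CfunEps (β : ℕ → Fin n → ℝ) (h : Fin n → ℝ) (Q : Mat n) (r : ℕ) (ε : ℝ)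
    (x : ℕ → ℝ) (Qs : ℕ → Mat n) : ℝ :=
  Cfun β h Q r x Qs - (ε / 2) * barrier Qs r

/-- `D_p(ε) = D_p + ε Ē_p` (with the `EP` errors). -/
def DE (β : ℕ → Fin n → ℝ) (x : ℕ → ℝ) (Qs : ℕ → Mat n) (r : ℕ) (ε : ℝ) (p : ℕ) : Mat n :=
  Dmat x Qs r p + ε • Ebar x (EP β x Qs r) r p

/-- `Λ_p(ε) = Λ_p + ε Ē_p` (with the `EC` errors). -/
def LE (β : ℕ → Fin n → ℝ) (x : ℕ → ℝ) (Qs : ℕ → Mat n) (Λ : Mat n) (r : ℕ) (ε : ℝ)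
    (p : ℕ) : Mat n :=
  Lam β x Qs Λ r p + ε • Ebar x (EC x Qs r) r p

/-- The approximate Crisanti–Sommers functional `𝒞_r^ε(Q̲)` obtained from the
perturbed Parisi functional at its critical point. -/
def CfunEpsApprox (β : ℕ → Fin n → ℝ) (h : Fin n → ℝ) (r : ℕ) (ε : ℝ)
    (x : ℕ → ℝ) (Qs : ℕ → Mat n) : ℝ :=
  (1 / 2) * (ip (vecMulVec h h) (DE β x Qs r ε 1)
    + (1 / x (r - 1)) * Real.log (DE β x Qs r ε (r - 1)).det
    - ∑ k ∈ Finset.Ico 1 (r - 1),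
        (1 / x k) * Real.log ((DE β x Qs r ε (k + 1)).det / (DE β x Qs r ε k).det)
    + ip (Qs 1) (DE β x Qs r ε 1)⁻¹
    + ∑ k ∈ Finset.Ico 1 r, x k * matSum (xiM β (Qs (k + 1)) - xiM β (Qs k))
    - ε * ∑ k ∈ Finset.Ico 1 (r - 1),
        ip (Ebar x (EP β x Qs r) r (k + 1) - Ebar x (EP β x Qs r) r k) (xi'M β (Qs (k + 1)))
    - ∑ k ∈ Finset.Ico 1 (r - 1),
        (ε / x k) * ip (DE β x Qs r ε (k + 1))⁻¹
          (Ebar x (EP β x Qs r) r k - Ebar x (EP β x Qs r) r (k + 1))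
    - ε * ip (DE β x Qs r ε (r - 1))⁻¹ (Ebar x (EP β x Qs r) r (r - 1))
    + ε * ip (xi'M β (Qs (r - 1))) (Ebar x (EP β x Qs r) r (r - 1))
    - ε * barrier Qs r)

/-- The approximate Parisi functional `𝒫_r^ε(Λ, Q̲)` obtained from the
perturbed Crisanti–Sommers functional at its critical point. -/
def PfunEpsApprox (β : ℕ → Fin n → ℝ) (h : Fin n → ℝ) (Q : Mat n) (r : ℕ) (ε : ℝ)
    (Λ : Mat n) (x : ℕ → ℝ) (Qs : ℕ → Mat n) : ℝ :=
  (1 / 2) * (ip Λ Q - (n : ℝ) - Real.log Λ.det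
    + ∑ k ∈ Finset.Ico 1 r,
        (1 / x k) * Real.log ((LE β x Qs Λ r ε (k + 1)).det / (LE β x Qs Λ r ε k).det)
    + ip (LE β x Qs Λ r ε 1)⁻¹ (vecMulVec h h + xi'M β (Qs 1))
    - ∑ k ∈ Finset.Ico 1 r, x k * matSum (thetaM β (Qs (k + 1)) - thetaM β (Qs k))
    - ε * ∑ k ∈ Finset.Ico 1 (r - 1),
        ip (Ebar x (EC x Qs r) r (k + 1) - Ebar x (EC x Qs r) r k) (Qs k)
    + ∑ k ∈ Finset.Ico 1 (r - 1),
        (ε / x k) * ip (LE β x Qs Λ r ε k)⁻¹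
          (Ebar x (EC x Qs r) r k - Ebar x (EC x Qs r) r (k + 1))
    + ε * ip (LE β x Qs Λ r ε (r - 1))⁻¹ (Ebar x (EC x Qs r) r (r - 1))
    + ε * ip (Qs (r - 1)) (Ebar x (EC x Qs r) r (r - 1))
    - ε * barrier Qs r)

/-! Continuous-time objects -/

/-- The entrywise derivative `Φ'(t)`. -/
def phiD (Φ : ℝ → Mat n) (t : ℝ) : Mat n := Matrix.of fun i j => deriv (fun s => Φ s i j) t

/-- `Φ̂(t) = ∫_t^n x(s) Φ'(s) ds` (entrywise). -/
def phiHat (x : ℝ → ℝ) (Φ : ℝ → Mat n) (t : ℝ) : Mat n :=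
  Matrix.of fun i j => ∫ s in t..(n : ℝ), x s * phiD Φ s i j

/-- `t_x = inf { t ∈ [0, n] : x(t) ≥ 1 }`. -/
def txx (nR : ℝ) (x : ℝ → ℝ) : ℝ := sInf {t : ℝ | t ∈ Set.Icc 0 nR ∧ 1 ≤ x t}

/-- The Crisanti–Sommers functional `𝒞(x, Φ)` in integral form. -/
def Ccont (β : ℕ → Fin n → ℝ) (h : Fin n → ℝ) (Q : Mat n)
    (x : ℝ → ℝ) (Φ : ℝ → Mat n) : ℝ :=
  (1 / 2) * ((∫ t in (0:ℝ)..(n : ℝ), x t * ip (xi'M β (Φ t) + vecMulVec h h) (phiD Φ t))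
    + Real.log (Q - Φ (txx (n : ℝ) x)).det
    + ∫ t in (0:ℝ)..(txx (n : ℝ) x), ip (phiHat x Φ t)⁻¹ (phiD Φ t))

/-- An admissible monotone matrix path `Φ` parametrized by its trace. -/
structure AdmPath (Q : Mat n) (Φ : ℝ → Mat n) : Prop where
  zero : Φ 0 = 0
  top : Φ (n : ℝ) = Q
  tr : ∀ t ∈ Set.Icc (0:ℝ) (n : ℝ), (Φ t).trace = t
  psd : ∀ t ∈ Set.Icc (0:ℝ) (n : ℝ), (Φ t).PosSemidef
  mono : ∀ s t : ℝ, s ∈ Set.Icc (0:ℝ) (n : ℝ) → t ∈ Set.Icc (0:ℝ) (n : ℝ) → s ≤ t →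
    (Φ t - Φ s).PosSemidef
  lip : ∀ i j, LipschitzOnWith 1 (fun t => Φ t i j) (Set.Icc (0:ℝ) (n : ℝ))

/-- An admissible c.d.f.: right-continuous, nondecreasing, from `[0,n]` to `[0,1]`,
with `x(0) = 0` and `x(n) = 1`. -/
structure AdmCDF (n : ℕ) (x : ℝ → ℝ) : Prop where
  zero : x 0 = 0
  top : x (n : ℝ) = 1
  mono : MonotoneOn x (Set.Icc (0:ℝ) (n : ℝ))
  mem : ∀ t ∈ Set.Icc (0:ℝ) (n : ℝ), x t ∈ Set.Icc (0:ℝ) 1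
  rightCont : ∀ t ∈ Set.Ico (0:ℝ) (n : ℝ), ContinuousWithinAt x (Set.Ici t) t

/-- An admissible pair `(x, Φ)` with `det(Q - Φ(t_x)) > 0`. -/
def AdmPair (Q : Mat n) (x : ℝ → ℝ) (Φ : ℝ → Mat n) : Prop :=
  AdmCDF n x ∧ AdmPath Q Φ ∧ 0 < (Q - Φ (txx (n : ℝ) x)).det

/-- Membership in the set `A_{T,L}`. -/
def ATL (Q : Mat n) (T L : ℝ) (x : ℝ → ℝ) (Φ : ℝ → Mat n) : Prop :=
  AdmPair Q x Φ ∧ (∀ t : ℝ, T ≤ t → t ≤ (n : ℝ) → x t = 1) ∧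
    ∀ i j, |(Q - Φ (txx (n : ℝ) x))⁻¹ i j| ≤ L

end SphericalSG

namespace SphericalSG



/-! ### Auxiliary lemmas for `xi'_gap_posdef` -/

private lemma quad_eq (M : Mat n) (v : Fin n → ℝ) :
    dotProduct (star v) (M *ᵥ v) = ∑ i, ∑ j, v i * v j * M i j := by
  simp only [star_trivial, dotProduct, Matrix.mulVec]
  refine Finset.sum_congr rfl fun i _ => ?_
  rw [Finset.mul_sum]
  exact Finset.sum_congr rfl fun j _ => by ring

private lemma entry_symm {M : Mat n} (hM : M.IsHermitian) (i j : Fin n) : M i j = M j i := by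
  simpa using (hM.apply i j).symm

private lemma sum_psd_nonneg (N : Mat n) (hN : N.PosSemidef) (w : Fin n → ℝ) :
    0 ≤ ∑ i, ∑ j, w i * w j * N i j := by
  have h := hN.dotProduct_mulVec_nonneg w
  rwa [quad_eq] at h

private lemma hadamard_decomp (N C D : Mat n) (hC : N = Cᴴ * C) (w : Fin n → ℝ) :
    ∑ i, ∑ j, w i * w j * (N i j * D i j)
      = ∑ α, ∑ i, ∑ j, (w i * C α i) * (w j * C α j) * D i j := by
  have hNij : ∀ i j, N i j = ∑ α, C α i * C α j := by
    intro i j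
    rw [hC]
    simp [Matrix.mul_apply, Matrix.conjTranspose_apply]
  calc ∑ i, ∑ j, w i * w j * (N i j * D i j)
      = ∑ i, ∑ j, ∑ α, (w i * C α i) * (w j * C α j) * D i j := by
        refine Finset.sum_congr rfl fun i _ => Finset.sum_congr rfl fun j _ => ?_
        rw [hNij i j, Finset.sum_mul, Finset.mul_sum]
        exact Finset.sum_congr rfl fun α _ => by ring
    _ = ∑ i, ∑ α, ∑ j, (w i * C α i) * (w j * C α j) * D i j :=
        Finset.sum_congr rfl fun i _ => Finset.sum_comm
    _ = ∑ α, ∑ i, ∑ j, (w i * C α i) * (w j * C α j) * D i j := Finset.sum_comm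

private lemma sum_hadamard_nonneg (N D : Mat n) (hN : N.PosSemidef) (hD : D.PosSemidef)
    (w : Fin n → ℝ) :
    0 ≤ ∑ i, ∑ j, w i * w j * (N i j * D i j) := by
  obtain ⟨C, hC⟩ : ∃ C : Mat n, N = Cᴴ * C := by
    open scoped MatrixOrder in
    obtain ⟨C, hC⟩ := CStarAlgebra.nonneg_iff_eq_star_mul_self.mp hN.nonneg
    exact ⟨C, by rw [hC, star_eq_conjTranspose]⟩
  rw [hadamard_decomp N C D hC w]
  refine Finset.sum_nonneg fun α _ => ?_
  have h := hD.dotProduct_mulVec_nonneg (fun i => w i * C α i)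
  rwa [quad_eq] at h

private lemma sum_hadamard_pos (N D : Mat n) (hN : N.PosSemidef) (hD : D.PosDef)
    (w : Fin n → ℝ) (i0 : Fin n) (hw : w i0 ≠ 0) (hN0 : 0 < N i0 i0) :
    0 < ∑ i, ∑ j, w i * w j * (N i j * D i j) := by
  obtain ⟨C, hC⟩ : ∃ C : Mat n, N = Cᴴ * C := by
    open scoped MatrixOrder in
    obtain ⟨C, hC⟩ := CStarAlgebra.nonneg_iff_eq_star_mul_self.mp hN.nonneg
    exact ⟨C, by rw [hC, star_eq_conjTranspose]⟩
  rw [hadamard_decomp N C D hC w]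
  have hC0 : ∃ α, C α i0 ≠ 0 := by
    by_contra hcon
    push_neg at hcon
    have h0 : N i0 i0 = 0 := by
      rw [hC]
      simp [Matrix.mul_apply, Matrix.conjTranspose_apply, hcon]
    rw [h0] at hN0
    exact lt_irrefl _ hN0
  obtain ⟨α0, hα0⟩ := hC0
  refine Finset.sum_pos' (fun α _ => ?_) ⟨α0, Finset.mem_univ _, ?_⟩
  · have h := hD.posSemidef.dotProduct_mulVec_nonneg (fun i => w i * C α i)
    rwa [quad_eq] at h
  · have hne : (fun i => w i * C α0 i) ≠ 0 := by
      intro hzero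
      exact mul_ne_zero hw hα0 (congrFun hzero i0)
    have h := hD.dotProduct_mulVec_pos (x := fun i => w i * C α0 i) hne
    rwa [quad_eq] at h

private lemma schur_psd (N D : Mat n) (hN : N.PosSemidef) (hD : D.PosSemidef) :
    (Matrix.of fun i j => N i j * D i j).PosSemidef := by
  refine Matrix.PosSemidef.of_dotProduct_mulVec_nonneg ?_ ?_
  · ext i j
    simp only [Matrix.conjTranspose_apply, Matrix.of_apply, star_trivial]
    rw [entry_symm hN.1 j i, entry_symm hD.1 j i]
  · intro x
    rw [quad_eq]
    simpa only [Matrix.of_apply] using sum_hadamard_nonneg N D hN hD x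

private lemma ones_psd : (Matrix.of fun _ _ : Fin n => (1:ℝ)).PosSemidef := by
  refine Matrix.PosSemidef.of_dotProduct_mulVec_nonneg ?_ ?_
  · ext i j
    simp
  · intro x
    rw [quad_eq]
    have h : (∑ i, ∑ j, x i * x j * (Matrix.of fun _ _ : Fin n => (1:ℝ)) i j)
        = (∑ i, x i) * (∑ j, x j) := by
      rw [Finset.sum_mul]
      refine Finset.sum_congr rfl fun i _ => ?_
      rw [Finset.mul_sum]
      exact Finset.sum_congr rfl fun j _ => by simp
    rw [h]
    exact mul_self_nonneg _

private lemma pow_psd (A : Mat n) (hA : A.PosSemidef) (k : ℕ) :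
    (Matrix.of fun i j => A i j ^ k).PosSemidef := by
  induction k with
  | zero =>
    have h : (Matrix.of fun i j : Fin n => A i j ^ 0) = Matrix.of fun _ _ : Fin n => (1:ℝ) := by
      ext i j; simp
    rw [h]
    exact ones_psd
  | succ k ih =>
    have h := schur_psd A (Matrix.of fun i j => A i j ^ k) hA ih
    have heq : (Matrix.of fun i j : Fin n => A i j ^ (k+1))
        = Matrix.of fun i j => A i j * (Matrix.of fun i j : Fin n => A i j ^ k) i j := by
      ext i j
      simp [pow_succ]
      ring
    rw [heq]
    exact h

private lemma psd_zero : ((0 : Mat n)).PosSemidef := by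
  refine Matrix.PosSemidef.of_dotProduct_mulVec_nonneg ?_ ?_
  · exact Matrix.isHermitian_zero
  · intro x
    simp [Matrix.zero_mulVec]

private lemma pow_diff_psd (A B : Mat n) (hA : A.PosSemidef) (hB : B.PosSemidef)
    (hAB : (A - B).PosSemidef) (k : ℕ) :
    (Matrix.of fun i j => A i j ^ k - B i j ^ k).PosSemidef := by
  induction k with
  | zero =>
    have h : (Matrix.of fun i j : Fin n => A i j ^ 0 - B i j ^ 0) = (0 : Mat n) := by
      ext i j; simp
    rw [h]
    exact psd_zero
  | succ k ih =>
    have h1 := schur_psd (Matrix.of fun i j => A i j ^ k) (A - B) (pow_psd A hA k) hAB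
    have h2 := schur_psd B (Matrix.of fun i j => A i j ^ k - B i j ^ k) hB ih
    have key : (Matrix.of fun i j : Fin n => A i j ^ (k+1) - B i j ^ (k+1))
        = (Matrix.of fun i j =>
            (Matrix.of fun i j : Fin n => A i j ^ k) i j * (A - B) i j)
          + Matrix.of fun i j =>
            B i j * (Matrix.of fun i j : Fin n => A i j ^ k - B i j ^ k) i j := by
      ext i j
      simp [Matrix.sub_apply, Matrix.add_apply]
      ring
    rw [key]
    exact h1.add h2

private lemma diag_pos {A : Mat n} (hA : A.PosDef) (i : Fin n) : 0 < A i i := by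
  have h := hA.dotProduct_mulVec_pos (x := Pi.single i (1:ℝ)) (by
    intro h0
    have := congrFun h0 i
    simp at this)
  rw [quad_eq] at h
  simpa [Pi.single_apply] using h

private lemma pow_diff_quad_pos (A B : Mat n) (hA : A.PosDef) (hB : B.PosSemidef)
    (hAB : (A - B).PosDef) (k : ℕ) (w : Fin n → ℝ) (i0 : Fin n) (hw : w i0 ≠ 0) :
    0 < ∑ i, ∑ j, w i * w j * (A i j ^ (k+1) - B i j ^ (k+1)) := by
  have hsplit : (∑ i, ∑ j, w i * w j * (A i j ^ (k+1) - B i j ^ (k+1)))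
      = (∑ i, ∑ j, w i * w j *
          ((Matrix.of fun i j : Fin n => A i j ^ k) i j * (A - B) i j))
        + ∑ i, ∑ j, w i * w j *
          (B i j * (Matrix.of fun i j : Fin n => A i j ^ k - B i j ^ k) i j) := by
    rw [← Finset.sum_add_distrib]
    refine Finset.sum_congr rfl fun i _ => ?_
    rw [← Finset.sum_add_distrib]
    refine Finset.sum_congr rfl fun j _ => ?_
    simp [Matrix.sub_apply]
    ring
  rw [hsplit]
  have hpos := sum_hadamard_pos (Matrix.of fun i j : Fin n => A i j ^ k) (A - B)
    (pow_psd A hA.posSemidef k) hAB w i0 hw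
    (by simpa using pow_pos (diag_pos hA i0) k)
  have hnn := sum_hadamard_nonneg B (Matrix.of fun i j : Fin n => A i j ^ k - B i j ^ k)
    hB (pow_diff_psd A B hA.posSemidef hB hAB.posSemidef k) w
  linarith

private lemma psd_posDef {M : Mat n} (hM : M.PosSemidef) (hdet : 0 < M.det) : M.PosDef := by
  refine Matrix.PosDef.of_dotProduct_mulVec_pos hM.1 fun x hx => ?_
  rcases (hM.dotProduct_mulVec_nonneg x).lt_or_eq with h | h
  · exact h
  · exfalso
    have hx0 : M *ᵥ x = 0 := (hM.dotProduct_mulVec_zero_iff x).mp h.symm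
    have hu : IsUnit M.det := isUnit_iff_ne_zero.mpr hdet.ne'
    have hx' : x = 0 := by
      have h2 := congrArg (fun y => M⁻¹ *ᵥ y) hx0
      simpa [Matrix.mulVec_mulVec, Matrix.nonsing_inv_mul M hu] using h2
    exact hx hx'

private lemma xi'M_herm (β : ℕ → Fin n → ℝ) (Q : Mat n) (hQ : Q.IsHermitian) :
    (xi'M β Q).IsHermitian := by
  ext i j
  simp only [Matrix.conjTranspose_apply, star_trivial, xi'M, Matrix.of_apply]
  exact tsum_congr fun p => by rw [entry_symm hQ j i]; ring

private lemma two_pow_bound (p : ℕ) : ((p : ℝ) + 2) ≤ 2 ^ (p + 2) := by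
  have h : (p + 2 : ℕ) < 2 ^ (p + 2) := Nat.lt_two_pow_self
  calc ((p : ℝ) + 2) = ((p + 2 : ℕ) : ℝ) := by push_cast; ring
    _ ≤ ((2 ^ (p + 2) : ℕ) : ℝ) := by exact_mod_cast h.le
    _ = 2 ^ (p + 2) := by push_cast; ring

private lemma summable_entry (β : ℕ → Fin n → ℝ)
    (hβnn : ∀ p j, 0 ≤ β p j)
    (hβsum : ∀ j, Summable fun p : ℕ => (2:ℝ) ^ p * β p j ^ 2)
    (x : ℝ) (hx : |x| ≤ 1) (i j : Fin n) :
    Summable fun p : ℕ => ((p : ℝ) + 2) * (β (p + 2) i * β (p + 2) j * x ^ (p + 1)) := by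
  have hsi : Summable fun p : ℕ => (2:ℝ) ^ (p + 2) * β (p + 2) i ^ 2 :=
    (summable_nat_add_iff (f := fun p : ℕ => (2:ℝ) ^ p * β p i ^ 2) 2).mpr (hβsum i)
  have hsj : Summable fun p : ℕ => (2:ℝ) ^ (p + 2) * β (p + 2) j ^ 2 :=
    (summable_nat_add_iff (f := fun p : ℕ => (2:ℝ) ^ p * β p j ^ 2) 2).mpr (hβsum j)
  have hmaj : Summable fun p : ℕ =>
      (2:ℝ) ^ (p + 2) * β (p + 2) i ^ 2 + (2:ℝ) ^ (p + 2) * β (p + 2) j ^ 2 := hsi.add hsj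
  refine Summable.of_abs (Summable.of_nonneg_of_le (fun p => abs_nonneg _) (fun p => ?_) hmaj)
  set a := β (p + 2) i with ha'
  set b := β (p + 2) j with hb'
  have ha : 0 ≤ a := hβnn _ _
  have hb : 0 ≤ b := hβnn _ _
  have hc : (0:ℝ) ≤ (p : ℝ) + 2 := by positivity
  have hy : |x ^ (p + 1)| ≤ 1 := by
    rw [abs_pow]
    exact pow_le_one₀ (abs_nonneg x) hx
  have habs : |((p : ℝ) + 2) * (a * b * x ^ (p + 1))| = ((p : ℝ) + 2) * (a * b * |x ^ (p + 1)|) := by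
    rw [abs_mul, abs_of_nonneg hc, abs_mul, abs_mul, abs_of_nonneg ha, abs_of_nonneg hb]
  rw [habs]
  have step1 : a * b * |x ^ (p + 1)| ≤ a * b := by
    nlinarith [mul_nonneg ha hb, abs_nonneg (x ^ (p + 1))]
  have step2 : a * b ≤ a ^ 2 + b ^ 2 := by
    nlinarith [sq_nonneg (a - b), mul_nonneg ha hb]
  have h2p : (0:ℝ) < 2 ^ (p + 2) := by positivity
  calc ((p : ℝ) + 2) * (a * b * |x ^ (p + 1)|)
      ≤ ((p : ℝ) + 2) * (a * b) := by
        exact mul_le_mul_of_nonneg_left step1 hc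
    _ ≤ (2:ℝ) ^ (p + 2) * (a ^ 2 + b ^ 2) := by
        apply mul_le_mul (two_pow_bound p) step2 (mul_nonneg ha hb) h2p.le
    _ = (2:ℝ) ^ (p + 2) * a ^ 2 + (2:ℝ) ^ (p + 2) * b ^ 2 := by ring

/-- Positive definiteness of increments of `ξ'`: if `Q_{ℓ-1} ⪯ Q_ℓ`,
`det Q_ℓ > 0` and `det(Q_ℓ - Q_{ℓ-1}) > 0`, then
`det(ξ'(Q_ℓ) - ξ'(Q_{ℓ-1})) > 0`. -/
theorem xi'_gap_posdef (n : ℕ) (hn : 1 ≤ n) (β : ℕ → Fin n → ℝ)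
    (hβnn : ∀ p j, 0 ≤ β p j)
    (hβodd : ∀ p : ℕ, Odd p → ∀ j, β p j = 0)
    (hβsum : ∀ j, Summable fun p : ℕ => (2:ℝ) ^ p * β p j ^ 2)
    (hβnz : ∀ j, ∃ p, 2 ≤ p ∧ β p j ≠ 0)
    (Qprev Qcur : Mat n) (hQprev : Qprev.PosSemidef) (hQcur : Qcur.PosSemidef)
    (hQprevMem : ∀ i j, Qprev i j ∈ Set.Icc (-1:ℝ) 1)
    (hQcurMem : ∀ i j, Qcur i j ∈ Set.Icc (-1:ℝ) 1)
    (hle : (Qcur - Qprev).PosSemidef)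
    (hdet : 0 < Qcur.det) (hdetGap : 0 < (Qcur - Qprev).det) :
    0 < (xi'M β Qcur - xi'M β Qprev).det := by
  classical
  -- abbreviations
  have habsA : ∀ i j, |Qcur i j| ≤ 1 := fun i j =>
    abs_le.mpr ⟨(hQcurMem i j).1, (hQcurMem i j).2⟩
  have habsB : ∀ i j, |Qprev i j| ≤ 1 := fun i j =>
    abs_le.mpr ⟨(hQprevMem i j).1, (hQprevMem i j).2⟩
  have hApos : Qcur.PosDef := psd_posDef hQcur hdet
  have hDpos : (Qcur - Qprev).PosDef := psd_posDef hle hdetGap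
  have hsumA : ∀ i j, Summable fun p : ℕ =>
      ((p : ℝ) + 2) * (β (p + 2) i * β (p + 2) j * Qcur i j ^ (p + 1)) :=
    fun i j => summable_entry β hβnn hβsum _ (habsA i j) i j
  have hsumB : ∀ i j, Summable fun p : ℕ =>
      ((p : ℝ) + 2) * (β (p + 2) i * β (p + 2) j * Qprev i j ^ (p + 1)) :=
    fun i j => summable_entry β hβnn hβsum _ (habsB i j) i j
  set F : ℕ → Fin n → Fin n → ℝ := fun p i j =>
    ((p : ℝ) + 2) * (β (p + 2) i * β (p + 2) j * (Qcur i j ^ (p + 1) - Qprev i j ^ (p + 1)))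
    with hF
  have hsumF : ∀ i j, Summable fun p : ℕ => F p i j := by
    intro i j
    refine ((hsumA i j).sub (hsumB i j)).congr fun p => ?_
    simp only [hF]
    ring
  have hMij : ∀ i j, (xi'M β Qcur - xi'M β Qprev) i j = ∑' p : ℕ, F p i j := by
    intro i j
    rw [Matrix.sub_apply]
    show (∑' p : ℕ, ((p : ℝ) + 2) * (β (p + 2) i * β (p + 2) j * Qcur i j ^ (p + 1)))
        - (∑' p : ℕ, ((p : ℝ) + 2) * (β (p + 2) i * β (p + 2) j * Qprev i j ^ (p + 1)))
      = ∑' p : ℕ, F p i j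
    rw [← Summable.tsum_sub (hsumA i j) (hsumB i j)]
    exact tsum_congr fun p => by simp only [hF]; ring
  have hMpos : (xi'M β Qcur - xi'M β Qprev).PosDef := by
    refine Matrix.PosDef.of_dotProduct_mulVec_pos ?_ ?_
    · exact (xi'M_herm β Qcur hQcur.1).sub (xi'M_herm β Qprev hQprev.1)
    · intro v hv
      rw [quad_eq]
      have hrw : (∑ i, ∑ j, v i * v j * (xi'M β Qcur - xi'M β Qprev) i j)
          = ∑' p : ℕ, ∑ i, ∑ j, v i * v j * F p i j := by
        calc ∑ i, ∑ j, v i * v j * (xi'M β Qcur - xi'M β Qprev) i j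
            = ∑ i, ∑ j, ∑' p : ℕ, v i * v j * F p i j := by
              refine Finset.sum_congr rfl fun i _ => Finset.sum_congr rfl fun j _ => ?_
              rw [hMij i j, ← tsum_mul_left]
          _ = ∑ i, ∑' p : ℕ, ∑ j, v i * v j * F p i j :=
              Finset.sum_congr rfl fun i _ =>
                (Summable.tsum_finsetSum (fun j _ => (hsumF i j).mul_left (v i * v j))).symm
          _ = ∑' p : ℕ, ∑ i, ∑ j, v i * v j * F p i j :=
              (Summable.tsum_finsetSum (fun i _ => summable_sum
                (fun j _ => (hsumF i j).mul_left (v i * v j)))).symm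
      rw [hrw]
      set g : ℕ → ℝ := fun p => ∑ i, ∑ j, v i * v j * F p i j with hg
      have hgsum : Summable g := summable_sum (fun i _ => summable_sum
        (fun j _ => (hsumF i j).mul_left (v i * v j)))
      have hgrw : ∀ p : ℕ, g p = ((p : ℝ) + 2) *
          ∑ i, ∑ j, (v i * β (p + 2) i) * (v j * β (p + 2) j) *
            (Qcur i j ^ (p + 1) - Qprev i j ^ (p + 1)) := by
        intro p
        rw [hg, Finset.mul_sum]
        refine Finset.sum_congr rfl fun i _ => ?_
        rw [Finset.mul_sum]
        refine Finset.sum_congr rfl fun j _ => ?_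
        simp only [hF]
        ring
      have hgnn : ∀ p : ℕ, 0 ≤ g p := by
        intro p
        rw [hgrw p]
        refine mul_nonneg (by positivity) ?_
        have h := sum_psd_nonneg
          (Matrix.of fun i j => Qcur i j ^ (p + 1) - Qprev i j ^ (p + 1))
          (pow_diff_psd Qcur Qprev hQcur hQprev hle (p + 1))
          (fun i => v i * β (p + 2) i)
        simpa using h
      obtain ⟨i0, hi0⟩ := Function.ne_iff.mp hv
      simp only [Pi.zero_apply] at hi0
      obtain ⟨q, hq2, hqne⟩ := hβnz i0
      obtain ⟨p0, rfl⟩ : ∃ p0, q = p0 + 2 := ⟨q - 2, by omega⟩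
      have hgpos : 0 < g p0 := by
        rw [hgrw p0]
        refine mul_pos (by positivity) ?_
        exact pow_diff_quad_pos Qcur Qprev hApos hQprev hDpos p0
          (fun i => v i * β (p0 + 2) i) i0 (mul_ne_zero hi0 hqne)
      exact Summable.tsum_pos hgsum hgnn p0 hgpos
  exact hMpos.det_pos



end SphericalSG

end
end

section
/- Let β¹ = (β¹_p)_{p≥2} and β² = (β²_p)_{p≥2} be two families of inverse-temperature vectors in ℝⁿ with nonnegative entries, vanishing for odd p, and satisfying Σ_{p≥2} 2^p β_p(j)² < ∞ for each j ≤ n. Suppose Σ_{p≥2} Σ_{i,j≤n} |β¹_p(i) β¹_p(j) − β²_p(i) β²_p(j)| ≤ δ. Then for every r ≥ 1 and every discrete path (x̲, Q̲) of order r with det(Q − Q_{r−1}) > 0, the discrete Crisanti–Sommers functionals computed with β¹ and β² satisfy |C_{r,β¹}(x̲, Q̲) − C_{r,β²}(x̲, Q̲)| ≤ 2δ. -/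
open Matrix BigOperators Filter MeasureTheory

noncomputable section

namespace SphericalSG



/-! Auxiliary lemmas for the proof below. -/

private lemma psd_abs_entry_aux {m : ℕ} (B : Matrix (Fin m) (Fin m) ℝ) (hB : B.PosSemidef)
    (i j : Fin m) : |B i j| ≤ (B i i + B j j) / 2 := by
  have hsym : B j i = B i j := by
    have hh := hB.1
    rw [Matrix.IsHermitian] at hh
    conv_lhs => rw [← hh]
    simp [Matrix.conjTranspose_apply]
  rcases eq_or_ne i j with rfl | hij
  · have h0 := hB.dotProduct_mulVec_nonneg (Pi.single i 1)
    simp [dotProduct, mulVec, Pi.single_apply] at h0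
    rw [abs_of_nonneg h0]; linarith
  · have key : ∀ c : ℝ, 0 ≤ B i i + c * B i j + c * B j i + c ^ 2 * B j j := by
      intro c
      have h0 := hB.dotProduct_mulVec_nonneg (Pi.single i 1 + Pi.single j c)
      simp only [star_trivial] at h0
      have heq : dotProduct (Pi.single i 1 + Pi.single j c) (B *ᵥ (Pi.single i 1 + Pi.single j c))
          = B i i + c * B i j + c * B j i + c ^ 2 * B j j := by
        simp [dotProduct, mulVec, Pi.single_apply, Finset.sum_add_distrib, mul_add, add_mul,
          Finset.sum_ite_eq, hij, hij.symm]
        ring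
      linarith [heq ▸ h0]
    have h1 := key 1
    have h2 := key (-1)
    rw [hsym] at h1 h2
    rw [abs_le]; constructor <;> nlinarith

private lemma psd_diag_nonneg_aux {m : ℕ} (B : Matrix (Fin m) (Fin m) ℝ) (hB : B.PosSemidef)
    (i : Fin m) : 0 ≤ B i i := by
  have h0 := hB.dotProduct_mulVec_nonneg (Pi.single i 1)
  simpa [dotProduct, mulVec, Pi.single_apply] using h0

private lemma sq_summable_aux {n : ℕ} (β : ℕ → Fin n → ℝ)
    (hs : ∀ j, Summable fun p : ℕ => (2:ℝ) ^ p * β p j ^ 2) (j : Fin n) :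
    Summable fun p : ℕ => β p j ^ 2 := by
  refine Summable.of_nonneg_of_le (fun p => sq_nonneg _) (fun p => ?_) (hs j)
  have h1 : (1:ℝ) ≤ 2 ^ p := one_le_pow₀ (by norm_num)
  nlinarith [sq_nonneg (β p j)]

private lemma prod_abs_summable_aux {n : ℕ} (β : ℕ → Fin n → ℝ)
    (hs : ∀ j, Summable fun p : ℕ => (2:ℝ) ^ p * β p j ^ 2) (i j : Fin n) :
    Summable fun p : ℕ => |β (p + 2) i * β (p + 2) j| := by
  have h : Summable fun p : ℕ => |β p i * β p j| := by
    refine Summable.of_nonneg_of_le (fun p => abs_nonneg _) (fun p => ?_)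
      (((sq_summable_aux β hs i).add (sq_summable_aux β hs j)).div_const 2)
    rw [abs_mul]
    nlinarith [sq_abs (β p i), sq_abs (β p j), sq_nonneg (|β p i| - |β p j|)]
  exact (summable_nat_add_iff 2).2 h

private lemma abs_tsum_le_aux (f : ℕ → ℝ) (hf : Summable fun p => |f p|) :
    |∑' p, f p| ≤ ∑' p, |f p| := by
  have h : Summable fun p => ‖f p‖ := by simpa [Real.norm_eq_abs] using hf
  calc |∑' p, f p| = ‖∑' p, f p‖ := (Real.norm_eq_abs _).symm
    _ ≤ ∑' p, ‖f p‖ := norm_tsum_le_tsum_norm h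
    _ = ∑' p, |f p| := by simp [Real.norm_eq_abs]

private lemma matSum_sub_aux {n : ℕ} (A B : Mat n) : matSum (A - B) = matSum A - matSum B := by
  simp [matSum, Finset.sum_sub_distrib]

/-- The key entrywise bound: for `A` with entries in `[-1,1]`,
`|matSum (ξ_{β1}(A)) - matSum (ξ_{β2}(A))|` is bounded by the total temperature discrepancy. -/
private lemma matSum_xi_diff_le {n : ℕ} (β1 β2 : ℕ → Fin n → ℝ)
    (hβ1sum : ∀ j, Summable fun p : ℕ => (2:ℝ) ^ p * β1 p j ^ 2)
    (hβ2sum : ∀ j, Summable fun p : ℕ => (2:ℝ) ^ p * β2 p j ^ 2)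
    (A : Mat n) (hA : ∀ i j, |A i j| ≤ 1) :
    |matSum (xiM β1 A) - matSum (xiM β2 A)| ≤
      ∑' p : ℕ, ∑ i, ∑ j, |β1 (p + 2) i * β1 (p + 2) j - β2 (p + 2) i * β2 (p + 2) j| := by
  have hApow : ∀ i j (p : ℕ), |A i j ^ (p + 2)| ≤ 1 := by
    intro i j p
    rw [abs_pow]
    exact pow_le_one₀ (abs_nonneg _) (hA i j)
  -- summability of each entrywise series
  have hs1 : ∀ i j : Fin n, Summable fun p : ℕ => β1 (p + 2) i * β1 (p + 2) j * A i j ^ (p + 2) := by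
    intro i j
    refine Summable.of_abs (Summable.of_nonneg_of_le (fun p => abs_nonneg _)
      (fun p => ?_) (prod_abs_summable_aux β1 hβ1sum i j))
    rw [abs_mul]
    calc |β1 (p + 2) i * β1 (p + 2) j| * |A i j ^ (p + 2)|
        ≤ |β1 (p + 2) i * β1 (p + 2) j| * 1 :=
          mul_le_mul_of_nonneg_left (hApow i j p) (abs_nonneg _)
      _ = |β1 (p + 2) i * β1 (p + 2) j| := mul_one _
  have hs2 : ∀ i j : Fin n, Summable fun p : ℕ => β2 (p + 2) i * β2 (p + 2) j * A i j ^ (p + 2) := by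
    intro i j
    refine Summable.of_abs (Summable.of_nonneg_of_le (fun p => abs_nonneg _)
      (fun p => ?_) (prod_abs_summable_aux β2 hβ2sum i j))
    rw [abs_mul]
    calc |β2 (p + 2) i * β2 (p + 2) j| * |A i j ^ (p + 2)|
        ≤ |β2 (p + 2) i * β2 (p + 2) j| * 1 :=
          mul_le_mul_of_nonneg_left (hApow i j p) (abs_nonneg _)
      _ = |β2 (p + 2) i * β2 (p + 2) j| := mul_one _
  have hsd : ∀ i j : Fin n, Summable fun p : ℕ =>
      |β1 (p + 2) i * β1 (p + 2) j - β2 (p + 2) i * β2 (p + 2) j| :=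
    fun i j => ((Summable.of_abs (prod_abs_summable_aux β1 hβ1sum i j)).sub
      (Summable.of_abs (prod_abs_summable_aux β2 hβ2sum i j))).abs
  have step1 : matSum (xiM β1 A) - matSum (xiM β2 A)
      = ∑ i, ∑ j, ∑' p : ℕ,
        (β1 (p + 2) i * β1 (p + 2) j - β2 (p + 2) i * β2 (p + 2) j) * A i j ^ (p + 2) := by
    rw [matSum, matSum, ← Finset.sum_sub_distrib]
    refine Finset.sum_congr rfl fun i _ => ?_
    rw [← Finset.sum_sub_distrib]
    refine Finset.sum_congr rfl fun j _ => ?_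
    rw [xiM, xiM, Matrix.of_apply, Matrix.of_apply, ← Summable.tsum_sub (hs1 i j) (hs2 i j)]
    exact tsum_congr fun p => by ring
  rw [step1]
  calc |∑ i, ∑ j, ∑' p : ℕ,
        (β1 (p + 2) i * β1 (p + 2) j - β2 (p + 2) i * β2 (p + 2) j) * A i j ^ (p + 2)|
      ≤ ∑ i, ∑ j, ∑' p : ℕ,
        |β1 (p + 2) i * β1 (p + 2) j - β2 (p + 2) i * β2 (p + 2) j| := by
        refine (Finset.abs_sum_le_sum_abs _ _).trans (Finset.sum_le_sum fun i _ => ?_)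
        refine (Finset.abs_sum_le_sum_abs _ _).trans (Finset.sum_le_sum fun j _ => ?_)
        have hsij : Summable fun p : ℕ =>
            (β1 (p + 2) i * β1 (p + 2) j - β2 (p + 2) i * β2 (p + 2) j) * A i j ^ (p + 2) := by
          have := (hs1 i j).sub (hs2 i j)
          refine this.congr fun p => by ring
        refine (abs_tsum_le_aux _ hsij.abs).trans (Summable.tsum_le_tsum (fun p => ?_) hsij.abs (hsd i j))
        rw [abs_mul]
        calc |β1 (p + 2) i * β1 (p + 2) j - β2 (p + 2) i * β2 (p + 2) j| * |A i j ^ (p + 2)|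
            ≤ |β1 (p + 2) i * β1 (p + 2) j - β2 (p + 2) i * β2 (p + 2) j| * 1 :=
              mul_le_mul_of_nonneg_left (hApow i j p) (abs_nonneg _)
          _ = _ := mul_one _
    _ = ∑' p : ℕ, ∑ i, ∑ j,
        |β1 (p + 2) i * β1 (p + 2) j - β2 (p + 2) i * β2 (p + 2) j| := by
        rw [Summable.tsum_finsetSum (fun i _ => summable_sum (fun j _ => hsd i j))]
        exact Finset.sum_congr rfl fun i _ =>
          (Summable.tsum_finsetSum (fun j _ => hsd i j)).symm


/-- Uniform continuity of the discrete Crisanti–Sommers functional with respect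
to the inverse temperature parameters. -/
theorem Cfun_uniformContinuous_temperature (n : ℕ) (hn : 1 ≤ n) (h : Fin n → ℝ)
    (β1 β2 : ℕ → Fin n → ℝ)
    (hβ1nn : ∀ p j, 0 ≤ β1 p j) (hβ2nn : ∀ p j, 0 ≤ β2 p j)
    (hβ1odd : ∀ p : ℕ, Odd p → ∀ j, β1 p j = 0)
    (hβ2odd : ∀ p : ℕ, Odd p → ∀ j, β2 p j = 0)
    (hβ1sum : ∀ j, Summable fun p : ℕ => (2:ℝ) ^ p * β1 p j ^ 2)
    (hβ2sum : ∀ j, Summable fun p : ℕ => (2:ℝ) ^ p * β2 p j ^ 2)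
    (Q : Mat n) (hQ : Q.PosDef) (hQdiag : ∀ i, Q i i = 1)
    (δ : ℝ)
    (hδ : (∑' p : ℕ, ∑ i, ∑ j,
      |β1 (p + 2) i * β1 (p + 2) j - β2 (p + 2) i * β2 (p + 2) j|) ≤ δ)
    (r : ℕ) (hr : 1 ≤ r) (x : ℕ → ℝ) (Qs : ℕ → Mat n)
    (hpath : IsPath Q r x Qs) (hdet : 0 < (Q - Qs (r - 1)).det) :
    |Cfun β1 h Q r x Qs - Cfun β2 h Q r x Qs| ≤ 2 * δ := by
  classical
  have hδ0 : 0 ≤ δ := le_trans (tsum_nonneg fun p => Finset.sum_nonneg fun i _ =>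
    Finset.sum_nonneg fun j _ => abs_nonneg _) hδ
  -- PSD facts along the path
  have hQsPSD : ∀ m, m ≤ r → (Qs m).PosSemidef := by
    intro m hm
    have hsum : Qs m = ∑ k ∈ Finset.range m, (Qs (k + 1) - Qs k) := by
      rw [Finset.sum_range_sub, hpath.Q0, sub_zero]
    rw [hsum]
    refine Finset.sum_induction _ _ (fun a b ha hb => ha.add hb)
      (Matrix.PosSemidef.zero) (fun k hk => ?_)
    exact hpath.inc k (lt_of_lt_of_le (Finset.mem_range.1 hk) hm)
  have hQdiff : ∀ m, m ≤ r → (Q - Qs m).PosSemidef := by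
    intro m hm
    have hsum : Q - Qs m = ∑ k ∈ Finset.Ico m r, (Qs (k + 1) - Qs k) := by
      rw [Finset.sum_Ico_eq_sub _ hm, Finset.sum_range_sub, Finset.sum_range_sub,
        hpath.Q0, hpath.Qr]
      abel
    rw [hsum]
    refine Finset.sum_induction _ _ (fun a b ha hb => ha.add hb)
      (Matrix.PosSemidef.zero) (fun k hk => ?_)
    exact hpath.inc k (Finset.mem_Ico.1 hk).2
  have hentry : ∀ m, m ≤ r → ∀ i j, |Qs m i j| ≤ 1 := by
    intro m hm i j
    have hdle : ∀ i, Qs m i i ≤ 1 := by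
      intro i
      have h0 := psd_diag_nonneg_aux _ (hQdiff m hm) i
      have : (Q - Qs m) i i = Q i i - Qs m i i := by simp [Matrix.sub_apply]
      rw [this, hQdiag i] at h0
      linarith
    have := psd_abs_entry_aux _ (hQsPSD m hm) i j
    have hi := hdle i
    have hj := hdle j
    linarith
  -- the temperature-difference function
  set F : ℕ → ℝ := fun m => matSum (xiM β1 (Qs m)) - matSum (xiM β2 (Qs m)) with hFdef
  have hF0 : F 0 = 0 := by
    simp [hFdef, matSum, xiM, hpath.Q0, Matrix.zero_apply, zero_pow]
  have hFb : ∀ m, m ≤ r → |F m| ≤ δ := by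
    intro m hm
    exact le_trans (matSum_xi_diff_le β1 β2 hβ1sum hβ2sum (Qs m) (hentry m hm)) hδ
  -- the difference of the functionals
  have hdiff : Cfun β1 h Q r x Qs - Cfun β2 h Q r x Qs
      = (1 / 2) * ∑ k ∈ Finset.Ico 1 r, x k * (F (k + 1) - F k) := by
    have e1 : Cfun β1 h Q r x Qs - Cfun β2 h Q r x Qs
        = (1 / 2) * (∑ k ∈ Finset.Ico 1 r, x k * matSum (xiM β1 (Qs (k + 1)) - xiM β1 (Qs k))
          - ∑ k ∈ Finset.Ico 1 r, x k * matSum (xiM β2 (Qs (k + 1)) - xiM β2 (Qs k))) := by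
      simp only [Cfun]; ring
    rw [e1, ← Finset.sum_sub_distrib]
    congr 1
    refine Finset.sum_congr rfl fun k _ => ?_
    simp only [hFdef, matSum_sub_aux]
    ring
  -- extend the sum to `range r`
  have hrange : ∑ k ∈ Finset.range r, x k * (F (k + 1) - F k)
      = ∑ k ∈ Finset.Ico 1 r, x k * (F (k + 1) - F k) := by
    rw [Finset.range_eq_Ico, Finset.sum_eq_sum_Ico_succ_bot hr, hpath.x0]
    ring
  -- Abel summation
  have habel := Finset.sum_range_by_parts x (fun k => F (k + 1) - F k) r
  have htel : ∀ m : ℕ, ∑ i ∈ Finset.range m, (F (i + 1) - F i) = F m := by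
    intro m; rw [Finset.sum_range_sub, hF0, sub_zero]
  simp only [smul_eq_mul, htel] at habel
  -- nonnegativity and monotonicity of x
  have hxnn : ∀ k, k ≤ r - 1 → 0 ≤ x k := by
    intro k
    induction k with
    | zero => intro _; rw [hpath.x0]
    | succ k ih =>
      intro hk
      exact le_trans (ih (le_trans (Nat.le_succ k) hk)) (hpath.xmono k hk)
  -- final bound
  have hbound : |∑ k ∈ Finset.range r, x k * (F (k + 1) - F k)| ≤ 2 * δ := by
    rw [habel]
    have hx1 : 0 ≤ x (r - 1) := hxnn _ le_rfl
    have hx2 : x (r - 1) ≤ 1 := hpath.xtop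
    have h1 : |x (r - 1) * F r| ≤ δ := by
      rw [abs_mul, abs_of_nonneg hx1]
      calc x (r - 1) * |F r| ≤ 1 * δ :=
        mul_le_mul hx2 (hFb r le_rfl) (abs_nonneg _) zero_le_one
      _ = δ := one_mul _
    have h2 : |∑ i ∈ Finset.range (r - 1), (x (i + 1) - x i) * F (i + 1)| ≤ δ := by
      calc |∑ i ∈ Finset.range (r - 1), (x (i + 1) - x i) * F (i + 1)|
          ≤ ∑ i ∈ Finset.range (r - 1), |(x (i + 1) - x i) * F (i + 1)| :=
            Finset.abs_sum_le_sum_abs _ _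
        _ ≤ ∑ i ∈ Finset.range (r - 1), (x (i + 1) - x i) * δ := by
            refine Finset.sum_le_sum fun i hi => ?_
            have hile : i + 1 ≤ r - 1 := Finset.mem_range.1 hi
            have hxm : x i ≤ x (i + 1) := hpath.xmono i hile
            have hF : |F (i + 1)| ≤ δ := hFb (i + 1) (le_trans hile (Nat.sub_le r 1))
            rw [abs_mul, abs_of_nonneg (by linarith : (0:ℝ) ≤ x (i + 1) - x i)]
            exact mul_le_mul_of_nonneg_left hF (by linarith)
        _ = (x (r - 1) - x 0) * δ := by rw [← Finset.sum_mul, Finset.sum_range_sub]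
        _ ≤ δ := by rw [hpath.x0, sub_zero]; nlinarith
    calc |x (r - 1) * F r - ∑ i ∈ Finset.range (r - 1), (x (i + 1) - x i) * F (i + 1)|
        ≤ |x (r - 1) * F r| + |∑ i ∈ Finset.range (r - 1), (x (i + 1) - x i) * F (i + 1)| :=
          abs_sub _ _
      _ ≤ 2 * δ := by linarith
  rw [hdiff, ← hrange, abs_mul]
  have : |(1:ℝ) / 2| = 1 / 2 := by norm_num
  rw [this]
  nlinarith [hbound, abs_nonneg (∑ k ∈ Finset.range r, x k * (F (k + 1) - F k))]



end SphericalSG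

end
end
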